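/- arXiv:2004.00140 — 2 statements merged into one kernel-verified Lean document; each statement's English description precedes it below -/
import Mathlib

section
/- Let ν be a σ-finite measure on a measurable space Y and μ a σ-finite measure on a measurable space X. Let p : Y → ℝ be nonnegative measurable with ∫ p dν = 1, and let px, qx : Y × X → ℝ be nonnegative measurable with ∫ px(y,·) dμ = 1 and ∫ qx(y,·) dμ = 1 for every y; let P_y and Q_y denote the probability measures on X with densities px(y,·) and qx(y,·) with respect to μ. Assume the functions (y,x) ↦ p(y)·px(y,x)·log(px(y,x)/(px(y,x)+qx(y,x))) and (y,x) ↦ p(y)·qx(y,x)·log(qx(y,x)/(px(y,x)+qx(y,x))) are (ν⊗μ)-integrable (convention 0·log(0/0) = 0). Then the supremum, over measurable D : Y × X → (0,1) for which the integrands below are integrable, of ∫∫ p(y)·px(y,x)·log D(y,x) d(ν⊗μ) + ∫∫ p(y)·qx(y,x)·log(1 − D(y,x)) d(ν⊗μ) equals −2·log 2 + 2·∫ p(y)·JSD(P_y, Q_y) dν(y). -/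
open MeasureTheory ENNReal

lemma log_ineq_aux {a b t : ℝ} (ha : 0 ≤ a) (hb : 0 ≤ b) (ht0 : 0 < t) (ht1 : t < 1) :
    a * Real.log t + b * Real.log (1 - t) ≤
    a * Real.log (a / (a + b)) + b * Real.log (b / (a + b)) := by
  rcases ha.eq_or_lt with ha' | ha'
  · rcases hb.eq_or_lt with hb' | hb'
    · simp [← ha', ← hb']
    · obtain rfl : a = 0 := ha'.symm
      have h1 : Real.log (1 - t) ≤ 0 := Real.log_nonpos (by linarith) (by linarith)
      simp only [zero_mul, zero_add, div_self hb'.ne', Real.log_one, mul_zero]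
      nlinarith [mul_le_mul_of_nonneg_left h1 hb]
  · rcases hb.eq_or_lt with hb' | hb'
    · obtain rfl : b = 0 := hb'.symm
      have h1 : Real.log t ≤ 0 := Real.log_nonpos ht0.le ht1.le
      simp only [zero_mul, add_zero, div_self ha'.ne', Real.log_one, mul_zero]
      nlinarith [mul_le_mul_of_nonneg_left h1 ha]
    · set s := a + b with hs
      have hspos : 0 < s := by positivity
      have h1 : Real.log (t * s / a) ≤ t * s / a - 1 :=
        Real.log_le_sub_one_of_pos (div_pos (mul_pos ht0 hspos) ha')
      have h2 : Real.log ((1 - t) * s / b) ≤ (1 - t) * s / b - 1 :=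
        Real.log_le_sub_one_of_pos (div_pos (mul_pos (by linarith) hspos) hb')
      have e1 : Real.log (t * s / a) = Real.log t + Real.log s - Real.log a := by
        rw [Real.log_div (mul_ne_zero ht0.ne' hspos.ne') ha'.ne', Real.log_mul ht0.ne' hspos.ne']
      have e2 : Real.log ((1 - t) * s / b) =
          Real.log (1 - t) + Real.log s - Real.log b := by
        rw [Real.log_div (mul_ne_zero (by linarith) hspos.ne') hb'.ne',
          Real.log_mul (by linarith : (1:ℝ) - t ≠ 0) hspos.ne']
      have e3 : Real.log (a / s) = Real.log a - Real.log s :=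
        Real.log_div ha'.ne' hspos.ne'
      have e4 : Real.log (b / s) = Real.log b - Real.log s :=
        Real.log_div hb'.ne' hspos.ne'
      rw [e3, e4]
      have k1 : a * Real.log (t * s / a) ≤ t * s - a := by
        have := mul_le_mul_of_nonneg_left h1 ha
        have : a * (t * s / a) = t * s := by field_simp
        nlinarith [mul_le_mul_of_nonneg_left h1 ha]
      have k2 : b * Real.log ((1 - t) * s / b) ≤ (1 - t) * s - b := by
        have : b * ((1 - t) * s / b) = (1 - t) * s := by field_simp
        nlinarith [mul_le_mul_of_nonneg_left h2 hb]
      rw [e1] at k1; rw [e2] at k2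
      have : t * s + (1 - t) * s = a + b := by rw [hs]; ring
      nlinarith

-- bound lemma: for 0 < ε, 0 ≤ a pos..., a>0, 0 ≤ b:
lemma log_bound_aux {a b ε : ℝ} (ha : 0 < a) (hb : 0 ≤ b) (hε : 0 < ε) :
    |Real.log ((a + ε) / (a + b + 2 * ε))| ≤ |Real.log (a / (a + b))| + Real.log 2 := by
  set s := a + b with hs
  have hspos : 0 < s := by positivity
  have htpos : 0 < (a + ε) / (s + 2 * ε) := by positivity
  have ht1 : (a + ε) / (s + 2 * ε) ≤ 1 := by
    rw [div_le_one (by positivity)]; linarith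
  have hlow : a / (2 * s) ≤ (a + ε) / (s + 2 * ε) := by
    rw [div_le_div_iff₀ (by positivity) (by positivity)]
    nlinarith
  have h1 : Real.log ((a + ε) / (s + 2 * ε)) ≤ 0 := Real.log_nonpos htpos.le ht1
  have h2 : Real.log (a / (2 * s)) ≤ Real.log ((a + ε) / (s + 2 * ε)) :=
    Real.log_le_log (by positivity) hlow
  have e : Real.log (a / (2 * s)) = Real.log (a / s) - Real.log 2 := by
    rw [show a / (2 * s) = a / s / 2 by rw [div_div, mul_comm], Real.log_div (by positivity) two_ne_zero]
  rw [abs_of_nonpos h1]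
  have : -(Real.log (a/s)) ≤ |Real.log (a/s)| := neg_le_abs _
  rw [e] at h2
  linarith

/-- Kullback–Leibler divergence `KL(P ‖ M) = ∫ log (dP/dM) dP`. -/
noncomputable def klDiv {Ω : Type*} [MeasurableSpace Ω] (P M : Measure Ω) : ℝ :=
  ∫ ω, Real.log ((P.rnDeriv M ω).toReal) ∂P

/-- Jensen–Shannon divergence
`JSD(P, Q) = (1/2) KL(P ‖ M) + (1/2) KL(Q ‖ M)` with `M = (1/2) • (P + Q)`. -/
noncomputable def jsd {Ω : Type*} [MeasurableSpace Ω] (P Q : Measure Ω) : ℝ :=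
  (1 / 2) * klDiv P ((1 / 2 : ℝ≥0∞) • (P + Q)) +
  (1 / 2) * klDiv Q ((1 / 2 : ℝ≥0∞) • (P + Q))


lemma my_integrable_of_integral_eq_one {X : Type*} [MeasurableSpace X] {μ : Measure X}
    {a : X → ℝ} (h : ∫ x, a x ∂μ = 1) : Integrable a μ := by
  by_contra hc
  rw [integral_undef hc] at h
  norm_num at h

lemma klDiv_withDensity_half_add {X : Type*} [MeasurableSpace X] (μ : Measure X) [SigmaFinite μ]
    (a b : X → ℝ) (ham : Measurable a) (hbm : Measurable b)
    (ha0 : ∀ x, 0 ≤ a x) (hb0 : ∀ x, 0 ≤ b x)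
    (ha1 : ∫ x, a x ∂μ = 1) (hb1 : ∫ x, b x ∂μ = 1)
    (hA : Integrable (fun x => a x * Real.log (a x / (a x + b x))) μ) :
    klDiv (μ.withDensity fun x => ENNReal.ofReal (a x))
      ((1 / 2 : ℝ≥0∞) • (μ.withDensity (fun x => ENNReal.ofReal (a x)) +
        μ.withDensity (fun x => ENNReal.ofReal (b x))))
      = Real.log 2 + ∫ x, a x * Real.log (a x / (a x + b x)) ∂μ := by
  have ha_int : Integrable a μ := my_integrable_of_integral_eq_one ha1
  have hb_int : Integrable b μ := my_integrable_of_integral_eq_one hb1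
  set f : X → ℝ≥0∞ := fun x => ENNReal.ofReal (a x) with hf_def
  set g : X → ℝ≥0∞ := fun x => ENNReal.ofReal (b x) with hg_def
  have hfm : Measurable f := ham.ennreal_ofReal
  have hgm : Measurable g := hbm.ennreal_ofReal
  set h : X → ℝ≥0∞ := fun x => (1/2 : ℝ≥0∞) * (f x + g x) with hh_def
  have hhm : Measurable h := (measurable_const.mul (hfm.add hgm))
  have hM : (1 / 2 : ℝ≥0∞) • (μ.withDensity f + μ.withDensity g) = μ.withDensity h := by
    rw [← withDensity_add_left hfm]
    exact (withDensity_smul (1/2 : ℝ≥0∞) (hfm.add hgm)).symm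
  set k : X → ℝ≥0∞ := fun x => f x / h x with hk_def
  have hkm : Measurable k := hfm.div hhm
  have hh_top : ∀ x, h x ≠ ∞ := by
    intro x
    simp only [hh_def, hf_def, hg_def]
    exact ENNReal.mul_ne_top (by norm_num) (by simp [ENNReal.add_ne_top])
  have hP : μ.withDensity f = (μ.withDensity h).withDensity k := by
    rw [← withDensity_mul μ hhm hkm]
    congr 1
    funext x
    by_cases h0 : h x = 0
    · have hf0 : f x = 0 := by
        have h0' := h0
        simp only [hh_def, mul_eq_zero, add_eq_zero] at h0'
        rcases h0' with h' | ⟨h', -⟩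
        · exact absurd h' (by norm_num)
        · exact h'
      simp [hk_def, h0, hf0]
    · exact (ENNReal.mul_div_cancel h0 (hh_top x)).symm
  have hlf : ∫⁻ x, f x ∂μ = 1 := by
    rw [← ofReal_integral_eq_lintegral_ofReal ha_int (Filter.Eventually.of_forall ha0), ha1,
      ENNReal.ofReal_one]
  have hlg : ∫⁻ x, g x ∂μ = 1 := by
    rw [← ofReal_integral_eq_lintegral_ofReal hb_int (Filter.Eventually.of_forall hb0), hb1,
      ENNReal.ofReal_one]
  haveI hMfin : IsFiniteMeasure (μ.withDensity h) := by
    refine isFiniteMeasure_withDensity ?_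
    rw [hh_def]
    simp only
    rw [lintegral_const_mul _ (show Measurable fun a => f a + g a from hfm.add hgm), lintegral_add_left hfm, hlf, hlg]
    norm_num
  have hrnM : (μ.withDensity f).rnDeriv (μ.withDensity h) =ᵐ[μ.withDensity h] k := by
    rw [hP]
    exact Measure.rnDeriv_withDensity (μ.withDensity h) hkm
  have hac : μ.withDensity f ≪ μ.withDensity h := by
    rw [hP]; exact withDensity_absolutelyContinuous _ _
  have hrnP : (μ.withDensity f).rnDeriv (μ.withDensity h) =ᵐ[μ.withDensity f] k :=
    hac.ae_le hrnM
  rw [klDiv, hM]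
  have step1 : ∫ ω, Real.log (((μ.withDensity f).rnDeriv (μ.withDensity h) ω).toReal)
        ∂(μ.withDensity f)
      = ∫ ω, Real.log ((k ω).toReal) ∂(μ.withDensity f) := by
    refine integral_congr_ae ?_
    filter_upwards [hrnP] with x hx
    rw [hx]
  rw [step1]
  -- now convert withDensity integral to μ integral
  have hfd : f = fun x => ((a x).toNNReal : ℝ≥0∞) := rfl
  have step2 : ∫ ω, Real.log ((k ω).toReal) ∂(μ.withDensity f)
      = ∫ x, a x * Real.log ((k x).toReal) ∂μ := by
    rw [hfd, integral_withDensity_eq_integral_smul (ham.real_toNNReal)]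
    congr 1
    funext x
    simp [NNReal.smul_def, Real.coe_toNNReal _ (ha0 x)]
  rw [step2]
  -- pointwise identity
  have step3 : ∀ x, a x * Real.log ((k x).toReal)
      = a x * Real.log 2 + a x * Real.log (a x / (a x + b x)) := by
    intro x
    rcases (ha0 x).eq_or_lt with h0 | hpos
    · simp [← h0]
    · have hsum : 0 < a x + b x := by have := hb0 x; linarith
      have htr : (k x).toReal = 2 * (a x / (a x + b x)) := by
        rw [hk_def]
        simp only [hh_def, hf_def, hg_def]
        rw [ENNReal.toReal_div, ENNReal.toReal_mul,
          ENNReal.toReal_add ENNReal.ofReal_ne_top ENNReal.ofReal_ne_top,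
          ENNReal.toReal_ofReal (ha0 x), ENNReal.toReal_ofReal (hb0 x)]
        simp only [ENNReal.toReal_div, ENNReal.toReal_ofNat, ENNReal.toReal_one]
        rw [show (1:ℝ)/2 * (a x + b x) = (a x + b x)/2 by ring, div_div_eq_mul_div,
          mul_comm (a x) 2, mul_div_assoc]
      rw [htr, Real.log_mul two_ne_zero (by positivity), mul_add]
  have step4 : ∫ x, a x * Real.log ((k x).toReal) ∂μ
      = ∫ x, (a x * Real.log 2 + a x * Real.log (a x / (a x + b x))) ∂μ :=
    integral_congr_ae (Filter.Eventually.of_forall fun x => step3 x)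
  rw [step4, integral_add (ha_int.mul_const _) hA, integral_mul_const, ha1, one_mul]

lemma jsd_eq_aux {X : Type*} [MeasurableSpace X] (μ : Measure X) [SigmaFinite μ]
    (a b : X → ℝ) (ham : Measurable a) (hbm : Measurable b)
    (ha0 : ∀ x, 0 ≤ a x) (hb0 : ∀ x, 0 ≤ b x)
    (ha1 : ∫ x, a x ∂μ = 1) (hb1 : ∫ x, b x ∂μ = 1)
    (hA : Integrable (fun x => a x * Real.log (a x / (a x + b x))) μ)
    (hB : Integrable (fun x => b x * Real.log (b x / (a x + b x))) μ) :
    jsd (μ.withDensity fun x => ENNReal.ofReal (a x))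
        (μ.withDensity fun x => ENNReal.ofReal (b x))
      = Real.log 2 + (1/2) * ∫ x, a x * Real.log (a x / (a x + b x)) ∂μ
          + (1/2) * ∫ x, b x * Real.log (b x / (a x + b x)) ∂μ := by
  rw [jsd]
  have h1 := klDiv_withDensity_half_add μ a b ham hbm ha0 hb0 ha1 hb1 hA
  have hcomm : ∀ x, a x + b x = b x + a x := fun x => add_comm _ _
  have hB' : Integrable (fun x => b x * Real.log (b x / (b x + a x))) μ := by
    simpa only [add_comm] using hB
  have h2 := klDiv_withDensity_half_add μ b a hbm ham hb0 ha0 hb1 ha1 hB'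
  rw [add_comm (μ.withDensity fun x => ENNReal.ofReal (b x))] at h2
  rw [h1, h2]
  have : ∫ x, b x * Real.log (b x / (b x + a x)) ∂μ
      = ∫ x, b x * Real.log (b x / (a x + b x)) ∂μ := by
    congr 1; funext x; rw [add_comm]
  rw [this]; ring

lemma tendsto_aux {Z : Type*} [MeasurableSpace Z] (m : Measure Z)
    (w a b : Z → ℝ) (hwm : Measurable w) (ham : Measurable a) (hbm : Measurable b)
    (hw0 : ∀ z, 0 ≤ w z) (ha0 : ∀ z, 0 ≤ a z) (hb0 : ∀ z, 0 ≤ b z)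
    (hlim : Integrable (fun z => w z * a z * Real.log (a z / (a z + b z))) m)
    (hwa : Integrable (fun z => w z * a z) m) :
    (∀ n : ℕ, Integrable (fun z => w z * a z *
        Real.log ((a z + 1/(n+1)) / (a z + b z + 2 * (1/(n+1))))) m) ∧
    Filter.Tendsto (fun n : ℕ => ∫ z, w z * a z *
        Real.log ((a z + 1/(n+1)) / (a z + b z + 2 * (1/(n+1)))) ∂m) Filter.atTop
      (nhds (∫ z, w z * a z * Real.log (a z / (a z + b z)) ∂m)) := by
  set F : ℕ → Z → ℝ := fun n z => w z * a z *
      Real.log ((a z + 1/(n+1)) / (a z + b z + 2 * (1/(n+1)))) with hF_def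
  set bound : Z → ℝ := fun z =>
      |w z * a z * Real.log (a z / (a z + b z))| + w z * a z * Real.log 2 with hbound_def
  have hεpos : ∀ n : ℕ, (0:ℝ) < 1/(n+1) := fun n => by positivity
  have hbound_int : Integrable bound m := hlim.abs.add (hwa.mul_const _)
  have hFb : ∀ n z, ‖F n z‖ ≤ bound z := by
    intro n z
    rcases (ha0 z).eq_or_lt with h0 | hpos
    · simp [hF_def, hbound_def, ← h0]
    · have hlb := log_bound_aux hpos (hb0 z) (hεpos n)
      have hwa0 : 0 ≤ w z * a z := mul_nonneg (hw0 z) (ha0 z)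
      rw [hF_def, hbound_def]
      calc ‖w z * a z * Real.log ((a z + 1/(n+1)) / (a z + b z + 2 * (1/(n+1))))‖
          = (w z * a z) * |Real.log ((a z + 1/(n+1)) / (a z + b z + 2 * (1/(n+1))))| := by
            rw [Real.norm_eq_abs, abs_mul, abs_of_nonneg hwa0]
        _ ≤ (w z * a z) * (|Real.log (a z / (a z + b z))| + Real.log 2) :=
            mul_le_mul_of_nonneg_left hlb hwa0
        _ = |w z * a z * Real.log (a z / (a z + b z))| + w z * a z * Real.log 2 := by
            rw [abs_mul, abs_of_nonneg hwa0]; ring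
  have hFm : ∀ n : ℕ, AEStronglyMeasurable (F n) m := by
    intro n
    exact ((hwm.mul ham).mul (Real.measurable_log.comp
      ((ham.add measurable_const).div ((ham.add hbm).add measurable_const)))).aestronglyMeasurable
  have hFtend : ∀ z, Filter.Tendsto (fun n => F n z) Filter.atTop
      (nhds (w z * a z * Real.log (a z / (a z + b z)))) := by
    intro z
    rcases (ha0 z).eq_or_lt with h0 | hpos
    · have : (fun n => F n z) = fun _ => (0:ℝ) := by
        funext n; simp [hF_def, ← h0]
      rw [this, ← h0]
      simpa using tendsto_const_nhds
    · have hs : 0 < a z + b z := by have := hb0 z; linarith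
      have hε : Filter.Tendsto (fun n : ℕ => 1/((n:ℝ)+1)) Filter.atTop (nhds 0) :=
        tendsto_one_div_add_atTop_nhds_zero_nat
      have h1 : Filter.Tendsto (fun n : ℕ => (a z + 1/((n:ℝ)+1)) / (a z + b z + 2 * (1/((n:ℝ)+1))))
          Filter.atTop (nhds (a z / (a z + b z))) := by
        have hnum : Filter.Tendsto (fun n : ℕ => a z + 1/((n:ℝ)+1)) Filter.atTop
            (nhds (a z + 0)) := tendsto_const_nhds.add hε
        have hden : Filter.Tendsto (fun n : ℕ => a z + b z + 2 * (1/((n:ℝ)+1))) Filter.atTop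
            (nhds (a z + b z + 2 * 0)) := tendsto_const_nhds.add (tendsto_const_nhds.mul hε)
        rw [add_zero] at hnum
        rw [mul_zero, add_zero] at hden
        exact hnum.div hden hs.ne'
      have h2 := ((Real.continuousAt_log (div_pos hpos hs).ne').tendsto.comp h1).const_mul
        (w z * a z)
      simpa [hF_def, mul_comm] using h2
  constructor
  · intro n
    exact hbound_int.mono (hFm n) (Filter.Eventually.of_forall fun z => (hFb n z).trans (le_abs_self _))
  · exact tendsto_integral_of_dominated_convergence bound hFm hbound_int
      (fun n => Filter.Eventually.of_forall (hFb n))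
      (Filter.Eventually.of_forall hFtend)

lemma integrable_mul_prod_aux {Y X : Type*} [MeasurableSpace Y] [MeasurableSpace X]
    (ν : Measure Y) [SigmaFinite ν] (μ : Measure X) [SigmaFinite μ]
    (p : Y → ℝ) (hpm : Measurable p) (hp0 : ∀ y, 0 ≤ p y) (hp1 : ∫ y, p y ∂ν = 1)
    (a : Y × X → ℝ) (ham : Measurable a) (ha0 : ∀ z, 0 ≤ a z)
    (ha1 : ∀ y, ∫ x, a (y, x) ∂μ = 1) :
    Integrable (fun z : Y × X => p z.1 * a z) (ν.prod μ) := by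
  have hp_int : Integrable p ν := my_integrable_of_integral_eq_one hp1
  have hmeas : Measurable (fun z : Y × X => p z.1 * a z) :=
    (hpm.comp measurable_fst).mul ham
  refine ⟨hmeas.aestronglyMeasurable, ?_⟩
  rw [hasFiniteIntegral_iff_ofReal (Filter.Eventually.of_forall
    (fun z => mul_nonneg (hp0 z.1) (ha0 z)))]
  rw [lintegral_prod _ (hmeas.ennreal_ofReal.aemeasurable)]
  have : ∀ y, ∫⁻ x, ENNReal.ofReal (p y * a (y, x)) ∂μ = ENNReal.ofReal (p y) := by
    intro y
    have ha_int : Integrable (fun x => a (y, x)) μ := my_integrable_of_integral_eq_one (ha1 y)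
    calc ∫⁻ x, ENNReal.ofReal (p y * a (y, x)) ∂μ
        = ∫⁻ x, ENNReal.ofReal (p y) * ENNReal.ofReal (a (y, x)) ∂μ := by
          congr 1; funext x; rw [ENNReal.ofReal_mul (hp0 y)]
      _ = ENNReal.ofReal (p y) * ∫⁻ x, ENNReal.ofReal (a (y, x)) ∂μ :=
          lintegral_const_mul _ (ham.comp measurable_prodMk_left).ennreal_ofReal
      _ = ENNReal.ofReal (p y) := by
          rw [← ofReal_integral_eq_lintegral_ofReal ha_int
            (Filter.Eventually.of_forall (fun x => ha0 (y, x))), ha1 y]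
          simp
  simp_rw [this]
  rw [← ofReal_integral_eq_lintegral_ofReal hp_int (Filter.Eventually.of_forall hp0), hp1]
  simp

theorem conditional_gan_sup_value_eq_expected_jsd
    {Y X : Type*} [MeasurableSpace Y] [MeasurableSpace X]
    (ν : Measure Y) [SigmaFinite ν] (μ : Measure X) [SigmaFinite μ]
    (p : Y → ℝ) (hpm : Measurable p) (hp0 : ∀ y, 0 ≤ p y) (hp1 : ∫ y, p y ∂ν = 1)
    (px qx : Y × X → ℝ) (hpxm : Measurable px) (hqxm : Measurable qx)
    (hpx0 : ∀ z, 0 ≤ px z) (hqx0 : ∀ z, 0 ≤ qx z)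
    (hpx1 : ∀ y, ∫ x, px (y, x) ∂μ = 1) (hqx1 : ∀ y, ∫ x, qx (y, x) ∂μ = 1)
    (h3 : Integrable
      (fun z => p z.1 * px z * Real.log (px z / (px z + qx z))) (ν.prod μ))
    (h4 : Integrable
      (fun z => p z.1 * qx z * Real.log (qx z / (px z + qx z))) (ν.prod μ)) :
    IsLUB
      {r : ℝ | ∃ D : Y × X → ℝ, Measurable D ∧ (∀ z, 0 < D z ∧ D z < 1) ∧
        Integrable (fun z => p z.1 * px z * Real.log (D z)) (ν.prod μ) ∧
        Integrable (fun z => p z.1 * qx z * Real.log (1 - D z)) (ν.prod μ) ∧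
        r = ∫ z, p z.1 * px z * Real.log (D z) ∂(ν.prod μ) +
            ∫ z, p z.1 * qx z * Real.log (1 - D z) ∂(ν.prod μ)}
      (-2 * Real.log 2 +
        2 * ∫ y, p y * jsd (μ.withDensity fun x => ENNReal.ofReal (px (y, x)))
                           (μ.withDensity fun x => ENNReal.ofReal (qx (y, x))) ∂ν) := by
  set m := ν.prod μ with hm_def
  have hp_int : Integrable p ν := my_integrable_of_integral_eq_one hp1
  have hppx : Integrable (fun z : Y × X => p z.1 * px z) m :=
    integrable_mul_prod_aux ν μ p hpm hp0 hp1 px hpxm hpx0 hpx1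
  have hpqx : Integrable (fun z : Y × X => p z.1 * qx z) m :=
    integrable_mul_prod_aux ν μ p hpm hp0 hp1 qx hqxm hqx0 hqx1
  -- Step A: identify the target with T = ∫ h3int + ∫ h4int
  have key : (fun y => p y * jsd (μ.withDensity fun x => ENNReal.ofReal (px (y, x)))
        (μ.withDensity fun x => ENNReal.ofReal (qx (y, x))))
      =ᵐ[ν] (fun y => p y * (Real.log 2
        + (1/2) * ∫ x, px (y, x) * Real.log (px (y, x) / (px (y, x) + qx (y, x))) ∂μ
        + (1/2) * ∫ x, qx (y, x) * Real.log (qx (y, x) / (px (y, x) + qx (y, x))) ∂μ)) := by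
    filter_upwards [h3.prod_right_ae, h4.prod_right_ae] with y hy3 hy4
    by_cases hp : p y = 0
    · simp [hp]
    · have hyA : Integrable
          (fun x => px (y, x) * Real.log (px (y, x) / (px (y, x) + qx (y, x)))) μ := by
        have h := hy3.const_mul (p y)⁻¹
        simp only [← mul_assoc, inv_mul_cancel₀ hp, one_mul] at h
        exact h
      have hyB : Integrable
          (fun x => qx (y, x) * Real.log (qx (y, x) / (px (y, x) + qx (y, x)))) μ := by
        have h := hy4.const_mul (p y)⁻¹
        simp only [← mul_assoc, inv_mul_cancel₀ hp, one_mul] at h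
        exact h
      rw [jsd_eq_aux μ (fun x => px (y, x)) (fun x => qx (y, x))
        (hpxm.comp measurable_prodMk_left) (hqxm.comp measurable_prodMk_left)
        (fun x => hpx0 (y, x)) (fun x => hqx0 (y, x)) (hpx1 y) (hqx1 y) hyA hyB]
  have hFi : Integrable (fun y => p y *
      ∫ x, px (y, x) * Real.log (px (y, x) / (px (y, x) + qx (y, x))) ∂μ) ν := by
    have heq : (fun y => p y *
        ∫ x, px (y, x) * Real.log (px (y, x) / (px (y, x) + qx (y, x))) ∂μ)
        = fun y => ∫ x, p (y, x).1 * px (y, x) * Real.log (px (y, x) / (px (y, x) + qx (y, x))) ∂μ := by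
      funext y
      rw [← integral_const_mul]
      congr 1; funext x; ring
    rw [heq]
    exact h3.integral_prod_left
  have hGi : Integrable (fun y => p y *
      ∫ x, qx (y, x) * Real.log (qx (y, x) / (px (y, x) + qx (y, x))) ∂μ) ν := by
    have heq : (fun y => p y *
        ∫ x, qx (y, x) * Real.log (qx (y, x) / (px (y, x) + qx (y, x))) ∂μ)
        = fun y => ∫ x, p (y, x).1 * qx (y, x) * Real.log (qx (y, x) / (px (y, x) + qx (y, x))) ∂μ := by
      funext y
      rw [← integral_const_mul]
      congr 1; funext x; ring
    rw [heq]
    exact h4.integral_prod_left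
  have hT : (-2 * Real.log 2 +
        2 * ∫ y, p y * jsd (μ.withDensity fun x => ENNReal.ofReal (px (y, x)))
                           (μ.withDensity fun x => ENNReal.ofReal (qx (y, x))) ∂ν)
      = ∫ z, p z.1 * px z * Real.log (px z / (px z + qx z)) ∂m +
        ∫ z, p z.1 * qx z * Real.log (qx z / (px z + qx z)) ∂m := by
    rw [integral_congr_ae key]
    have expand : (fun y => p y * (Real.log 2
        + (1/2) * ∫ x, px (y, x) * Real.log (px (y, x) / (px (y, x) + qx (y, x))) ∂μ
        + (1/2) * ∫ x, qx (y, x) * Real.log (qx (y, x) / (px (y, x) + qx (y, x))) ∂μ))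
        = (fun y => p y * Real.log 2
        + ((1/2) * (p y * ∫ x, px (y, x) * Real.log (px (y, x) / (px (y, x) + qx (y, x))) ∂μ)
        + (1/2) * (p y * ∫ x, qx (y, x) * Real.log (qx (y, x) / (px (y, x) + qx (y, x))) ∂μ))) := by
      funext y; ring
    have hF2 : Integrable (fun y =>
        (1/2 : ℝ) * (p y * ∫ x, px (y, x) * Real.log (px (y, x) / (px (y, x) + qx (y, x))) ∂μ)) ν :=
      hFi.const_mul _
    have hG2 : Integrable (fun y =>
        (1/2 : ℝ) * (p y * ∫ x, qx (y, x) * Real.log (qx (y, x) / (px (y, x) + qx (y, x))) ∂μ)) ν :=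
      hGi.const_mul _
    have hsum2 : Integrable (fun y =>
        (1/2 : ℝ) * (p y * ∫ x, px (y, x) * Real.log (px (y, x) / (px (y, x) + qx (y, x))) ∂μ)
        + (1/2 : ℝ) * (p y * ∫ x, qx (y, x) * Real.log (qx (y, x) / (px (y, x) + qx (y, x))) ∂μ)) ν :=
      hF2.add hG2
    rw [expand, integral_add (hp_int.mul_const _) hsum2, integral_add hF2 hG2,
      integral_mul_const, hp1, integral_const_mul _ _, integral_const_mul _ _]
    have e3 : ∫ y, (p y * ∫ x, px (y, x) * Real.log (px (y, x) / (px (y, x) + qx (y, x))) ∂μ) ∂ν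
        = ∫ z, p z.1 * px z * Real.log (px z / (px z + qx z)) ∂m := by
      rw [hm_def, integral_prod _ h3]
      congr 1; funext y
      rw [← integral_const_mul]
      congr 1; funext x; ring
    have e4 : ∫ y, (p y * ∫ x, qx (y, x) * Real.log (qx (y, x) / (px (y, x) + qx (y, x))) ∂μ) ∂ν
        = ∫ z, p z.1 * qx z * Real.log (qx z / (px z + qx z)) ∂m := by
      rw [hm_def, integral_prod _ h4]
      congr 1; funext y
      rw [← integral_const_mul]
      congr 1; funext x; ring
    rw [e3, e4]; ring
  rw [hT]
  constructor
  · rintro r ⟨D, hDm, hD01, hI1, hI2, rfl⟩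
    have hpt : ∀ z, p z.1 * px z * Real.log (D z) + p z.1 * qx z * Real.log (1 - D z)
        ≤ p z.1 * px z * Real.log (px z / (px z + qx z)) +
          p z.1 * qx z * Real.log (qx z / (px z + qx z)) := by
      intro z
      rcases (hp0 z.1).eq_or_lt with hp | hp
      · simp [← hp]
      · have h := log_ineq_aux (a := p z.1 * px z) (b := p z.1 * qx z)
          (mul_nonneg hp.le (hpx0 z)) (mul_nonneg hp.le (hqx0 z)) (hD01 z).1 (hD01 z).2
        rw [show p z.1 * px z + p z.1 * qx z = p z.1 * (px z + qx z) by ring,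
          mul_div_mul_left _ _ hp.ne', mul_div_mul_left _ _ hp.ne'] at h
        exact h
    calc ∫ z, p z.1 * px z * Real.log (D z) ∂m + ∫ z, p z.1 * qx z * Real.log (1 - D z) ∂m
        = ∫ z, (p z.1 * px z * Real.log (D z) + p z.1 * qx z * Real.log (1 - D z)) ∂m :=
          (integral_add hI1 hI2).symm
      _ ≤ ∫ z, (p z.1 * px z * Real.log (px z / (px z + qx z)) +
            p z.1 * qx z * Real.log (qx z / (px z + qx z))) ∂m :=
          integral_mono (hI1.add hI2) (h3.add h4) hpt
      _ = _ := integral_add h3 h4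
  · intro c hc
    have h4' : Integrable
        (fun z => p z.1 * qx z * Real.log (qx z / (qx z + px z))) m := by
      simpa only [add_comm] using h4
    obtain ⟨hInt1, hTend1⟩ := tendsto_aux m (fun z => p z.1) px qx (hpm.comp measurable_fst)
      hpxm hqxm (fun z => hp0 z.1) hpx0 hqx0 h3 hppx
    obtain ⟨hInt2, hTend2⟩ := tendsto_aux m (fun z => p z.1) qx px (hpm.comp measurable_fst)
      hqxm hpxm (fun z => hp0 z.1) hqx0 hpx0 h4' hpqx
    have hlim2 : ∫ z, p z.1 * qx z * Real.log (qx z / (qx z + px z)) ∂m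
        = ∫ z, p z.1 * qx z * Real.log (qx z / (px z + qx z)) ∂m := by
      congr 1; funext z; rw [add_comm (qx z)]
    rw [hlim2] at hTend2
    refine le_of_tendsto (hTend1.add hTend2) (Filter.Eventually.of_forall fun n => ?_)
    have hεpos : (0:ℝ) < 1/((n:ℝ)+1) := by positivity
    set ε : ℝ := 1/((n:ℝ)+1) with hε_def
    set D : Y × X → ℝ := fun z => (px z + ε) / (px z + qx z + 2 * ε) with hD_def
    have hswap : (fun z : Y × X => p z.1 * qx z * Real.log (1 - D z))
        = fun z => p z.1 * qx z * Real.log ((qx z + ε) / (qx z + px z + 2 * ε)) := by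
      funext z
      have hden : 0 < px z + qx z + 2 * ε := by
        have := hpx0 z; have := hqx0 z; linarith
      congr 2
      rw [hD_def]
      show 1 - (px z + ε) / (px z + qx z + 2 * ε) = (qx z + ε) / (qx z + px z + 2 * ε)
      rw [show qx z + px z + 2 * ε = px z + qx z + 2 * ε by ring,
        eq_div_iff hden.ne', sub_mul, one_mul, div_mul_cancel₀ _ hden.ne']
      ring
    refine hc ⟨D, ?_, ?_, ?_, ?_, ?_⟩
    · exact (hpxm.add measurable_const).div ((hpxm.add hqxm).add measurable_const)
    · intro z
      have h1 := hpx0 z; have h2 := hqx0 z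
      constructor
      · exact div_pos (by linarith) (by linarith)
      · rw [div_lt_one (by linarith)]; linarith
    · exact hInt1 n
    · rw [hswap]
      exact hInt2 n
    · rw [hswap]
end

section
/- (Optimality of DSGAN, value function.) Let ν be a σ-finite measure on a measurable space Y and μ a σ-finite measure on a measurable space X. Let p, q : Y → ℝ be nonnegative measurable with ∫ p dν = 1 and ∫ q dν = 1, and px, qx : Y × X → ℝ nonnegative measurable with ∫ px(y,·) dμ = 1 and ∫ qx(y,·) dμ = 1 for every y. Let P♯ and Q♯ be the probability measures on Y × X with joint densities (y,x) ↦ p(y)·px(y,x) and (y,x) ↦ q(y)·qx(y,x) with respect to ν⊗μ. Assuming the relevant integrands are (ν⊗μ)-integrable (convention 0·log(0/0) = 0), the supremum over measurable D : Y × X → (0,1) of ∫∫ p(y)·px(y,x)·log D(y,x) d(ν⊗μ) + ∫∫ q(y)·qx(y,x)·log(1 − D(y,x)) d(ν⊗μ) equals −2·log 2 + 2·JSD(P♯, Q♯). -/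
open MeasureTheory ENNReal

noncomputable def dsganTstar (a b : ℝ) : ℝ := if a + b = 0 then 1/2 else a / (a + b)

lemma dsganTstar_mem {a b : ℝ} (ha : 0 ≤ a) (hb : 0 ≤ b) :
    0 ≤ dsganTstar a b ∧ dsganTstar a b ≤ 1 := by
  unfold dsganTstar
  split_ifs with h
  · norm_num
  · have hs : 0 < a + b := lt_of_le_of_ne (by linarith) (Ne.symm h)
    exact ⟨by positivity, by rw [div_le_one hs]; linarith⟩

lemma dsgan_ptwise_upper (a b t : ℝ) (ha : 0 ≤ a) (hb : 0 ≤ b)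
    (ht0 : 0 < t) (ht1 : t < 1) :
    a * Real.log t + b * Real.log (1 - t) ≤
      a * Real.log (a / (a + b)) + b * Real.log (b / (a + b)) := by
  have ht1' : 0 < 1 - t := by linarith
  rcases eq_or_lt_of_le ha with rfl | ha'
  · rcases eq_or_lt_of_le hb with rfl | hb'
    · simp [Real.log_nonpos (by linarith) (by linarith)]
    · simp only [zero_mul, zero_add, zero_div, div_self hb'.ne', Real.log_one, mul_zero]
      exact mul_nonpos_of_nonneg_of_nonpos hb (Real.log_nonpos (by linarith) (by linarith))
  rcases eq_or_lt_of_le hb with rfl | hb'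
  · simp only [zero_mul, add_zero, zero_div, div_self ha'.ne', Real.log_one, mul_zero]
    exact mul_nonpos_of_nonneg_of_nonpos ha (Real.log_nonpos (by linarith) (by linarith))
  · have hs : 0 < a + b := by linarith
    have h1 : a * Real.log (t * (a + b) / a) ≤ a * (t * (a + b) / a - 1) :=
      mul_le_mul_of_nonneg_left (Real.log_le_sub_one_of_pos (by positivity)) ha
    have h2 : b * Real.log ((1 - t) * (a + b) / b) ≤ b * ((1 - t) * (a + b) / b - 1) :=
      mul_le_mul_of_nonneg_left (Real.log_le_sub_one_of_pos (by positivity)) hb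
    have e1 : Real.log (t * (a + b) / a) = Real.log t - Real.log (a / (a + b)) := by
      rw [Real.log_div (by positivity) (by positivity),
        Real.log_mul (by positivity) (by positivity),
        Real.log_div (by positivity) (by positivity)]
      ring
    have e2 : Real.log ((1 - t) * (a + b) / b) = Real.log (1 - t) - Real.log (b / (a + b)) := by
      rw [Real.log_div (by positivity) (by positivity),
        Real.log_mul (by positivity) (by positivity),
        Real.log_div (by positivity) (by positivity)]
      ring
    rw [e1] at h1; rw [e2] at h2
    have r1 : a * (t * (a + b) / a - 1) = t * (a + b) - a := by field_simp
    have r2 : b * ((1 - t) * (a + b) / b - 1) = (1 - t) * (a + b) - b := by field_simp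
    rw [r1] at h1; rw [r2] at h2
    nlinarith [h1, h2]

lemma dsgan_ptwise_lower (a b ε : ℝ) (ha : 0 ≤ a) (hb : 0 ≤ b)
    (hε0 : 0 < ε) (hε1 : ε < 1) :
    a * Real.log (a / (a + b)) + b * Real.log (b / (a + b)) + (a + b) * Real.log (1 - ε) ≤
      a * Real.log ((1 - ε) * dsganTstar a b + ε / 2) +
        b * Real.log (1 - ((1 - ε) * dsganTstar a b + ε / 2)) := by
  have hε1' : 0 < 1 - ε := by linarith
  have hlog := Real.log_le_log hε1' (by linarith : (1:ℝ) - ε ≤ 1 - ε / 2)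
  rcases eq_or_lt_of_le (by linarith : (0:ℝ) ≤ a + b) with hs | hs
  · have ha0 : a = 0 := by linarith
    have hb0 : b = 0 := by linarith
    simp [ha0, hb0]
  · unfold dsganTstar
    rw [if_neg (by positivity)]
    rcases eq_or_lt_of_le ha with rfl | ha'
    · have hb' : 0 < b := by linarith
      simp only [zero_mul, zero_add, zero_div, div_self hb'.ne', Real.log_one, mul_zero,
        add_zero]
      exact mul_le_mul_of_nonneg_left hlog hb
    rcases eq_or_lt_of_le hb with rfl | hb'
    · simp only [zero_mul, add_zero, zero_div, div_self ha'.ne', Real.log_one, mul_zero,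
        zero_add, mul_one]
      have : (1:ℝ) - ε + ε / 2 = 1 - ε / 2 := by ring
      rw [this]
      exact mul_le_mul_of_nonneg_left hlog ha
    · have hta : 0 < a / (a + b) := by positivity
      have htb : (1:ℝ) - a / (a + b) = b / (a + b) := by field_simp; ring
      have htb' : 0 < b / (a + b) := by positivity
      have hD1 : (1 - ε) * (a / (a + b)) ≤ (1 - ε) * (a / (a + b)) + ε / 2 := by linarith
      have hD2 : (1 - ε) * (b / (a + b)) ≤ 1 - ((1 - ε) * (a / (a + b)) + ε / 2) := by
        nlinarith [htb, hta, htb']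
      have l1 : Real.log ((1 - ε) * (a / (a + b))) ≤
          Real.log ((1 - ε) * (a / (a + b)) + ε / 2) :=
        Real.log_le_log (by positivity) hD1
      have l2 : Real.log ((1 - ε) * (b / (a + b))) ≤
          Real.log (1 - ((1 - ε) * (a / (a + b)) + ε / 2)) :=
        Real.log_le_log (by positivity) hD2
      rw [Real.log_mul (by positivity) (by positivity)] at l1
      rw [Real.log_mul (by positivity) (by positivity)] at l2
      nlinarith [l1, l2]

lemma dsgan_isLUB {Z : Type*} [MeasurableSpace Z] (π : Measure Z) [SigmaFinite π]
    (f g : Z → ℝ) (hfm : Measurable f) (hgm : Measurable g)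
    (hf0 : ∀ z, 0 ≤ f z) (hg0 : ∀ z, 0 ≤ g z)
    (hfi : Integrable f π) (hgi : Integrable g π)
    (hf1 : ∫ z, f z ∂π = 1) (hg1 : ∫ z, g z ∂π = 1)
    (h3 : Integrable (fun z => f z * Real.log (f z / (f z + g z))) π)
    (h4 : Integrable (fun z => g z * Real.log (g z / (f z + g z))) π) :
    IsLUB {r : ℝ | ∃ D : Z → ℝ, Measurable D ∧ (∀ z, 0 < D z ∧ D z < 1) ∧
        Integrable (fun z => f z * Real.log (D z)) π ∧
        Integrable (fun z => g z * Real.log (1 - D z)) π ∧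
        r = ∫ z, f z * Real.log (D z) ∂π + ∫ z, g z * Real.log (1 - D z) ∂π}
      ((∫ z, f z * Real.log (f z / (f z + g z)) ∂π) +
       (∫ z, g z * Real.log (g z / (f z + g z)) ∂π)) := by
  constructor
  · rintro r ⟨D, hDm, hD01, hi1, hi2, rfl⟩
    rw [← integral_add hi1 hi2, ← integral_add h3 h4]
    exact integral_mono (hi1.add hi2) (h3.add h4) fun z =>
      dsgan_ptwise_upper _ _ _ (hf0 z) (hg0 z) (hD01 z).1 (hD01 z).2
  · intro b hb
    refine le_of_forall_pos_le_add fun δ hδ => ?_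
    set ε : ℝ := 1 - Real.exp (-(δ/2)) with hεdef
    clear_value ε
    have hε0 : 0 < ε := by
      have : Real.exp (-(δ/2)) < 1 := Real.exp_lt_one_iff.mpr (by linarith)
      simp only [hεdef]; linarith
    have hε1 : ε < 1 := by
      have := Real.exp_pos (-(δ/2)); simp only [hεdef]; linarith
    have h1ε : (1:ℝ) - ε = Real.exp (-(δ/2)) := by simp [hεdef]
    have hlogε : Real.log (1 - ε) = -(δ/2) := by rw [h1ε, Real.log_exp]
    set T : Z → ℝ := fun z => dsganTstar (f z) (g z) with hTdef
    have hTm : Measurable T := by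
      have hset : MeasurableSet {z | f z + g z = 0} :=
        measurableSet_eq_fun (hfm.add hgm) measurable_const
      exact Measurable.ite hset measurable_const (hfm.div (hfm.add hgm))
    have hT0 : ∀ z, 0 ≤ T z := fun z => (dsganTstar_mem (hf0 z) (hg0 z)).1
    have hT1 : ∀ z, T z ≤ 1 := fun z => (dsganTstar_mem (hf0 z) (hg0 z)).2
    set D : Z → ℝ := fun z => (1 - ε) * T z + ε / 2 with hDdef
    have hDm : Measurable D := (hTm.const_mul _).add_const _
    clear_value T
    have hDlb : ∀ z, ε / 2 ≤ D z := fun z => by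
      have h1 : 0 ≤ (1 - ε) * T z := mul_nonneg (by linarith) (hT0 z)
      show ε / 2 ≤ (1 - ε) * T z + ε / 2
      linarith
    have hDub : ∀ z, D z ≤ 1 - ε / 2 := fun z => by
      have h1 : (1 - ε) * T z ≤ (1 - ε) * 1 :=
        mul_le_mul_of_nonneg_left (hT1 z) (by linarith)
      show (1 - ε) * T z + ε / 2 ≤ 1 - ε / 2
      linarith
    have hDeq : ∀ z, D z = (1 - ε) * T z + ε / 2 := fun _ => rfl
    clear_value D
    have hD01 : ∀ z, 0 < D z ∧ D z < 1 := fun z =>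
      ⟨lt_of_lt_of_le (by linarith) (hDlb z), lt_of_le_of_lt (hDub z) (by linarith)⟩
    have hC : ∀ (u : ℝ), ε / 2 ≤ u → u ≤ 1 → |Real.log u| ≤ |Real.log (ε / 2)| := by
      intro u h1 h2
      have hu0 : 0 < u := lt_of_lt_of_le (by linarith) h1
      have l1 : Real.log (ε/2) ≤ Real.log u := Real.log_le_log (by linarith) h1
      have l2 : Real.log u ≤ 0 := Real.log_nonpos (le_of_lt hu0) h2
      rw [abs_of_nonpos l2, abs_of_nonpos (by linarith)]
      linarith
    have hi1 : Integrable (fun z => f z * Real.log (D z)) π := by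
      refine Integrable.mono (hfi.const_mul |Real.log (ε/2)|)
        ((hfm.mul (Real.measurable_log.comp hDm)).aestronglyMeasurable) (ae_of_all _ fun z => ?_)
      rw [Real.norm_eq_abs, Real.norm_eq_abs, abs_mul, abs_mul, abs_abs,
        abs_of_nonneg (hf0 z), mul_comm (f z)]
      exact mul_le_mul_of_nonneg_right
        (hC (D z) (hDlb z) (by linarith [hDub z, hε0])) (hf0 z)
    have hi2 : Integrable (fun z => g z * Real.log (1 - D z)) π := by
      refine Integrable.mono (hgi.const_mul |Real.log (ε/2)|)
        ((hgm.mul (Real.measurable_log.comp (measurable_const.sub hDm))).aestronglyMeasurable)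
        (ae_of_all _ fun z => ?_)
      rw [Real.norm_eq_abs, Real.norm_eq_abs, abs_mul, abs_mul, abs_abs,
        abs_of_nonneg (hg0 z), mul_comm (g z)]
      exact mul_le_mul_of_nonneg_right
        (hC (1 - D z) (by linarith [hDub z]) (by linarith [(hD01 z).1])) (hg0 z)
    have hv : (∫ z, f z * Real.log (D z) ∂π + ∫ z, g z * Real.log (1 - D z) ∂π) ∈
        {r : ℝ | ∃ D : Z → ℝ, Measurable D ∧ (∀ z, 0 < D z ∧ D z < 1) ∧
          Integrable (fun z => f z * Real.log (D z)) π ∧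
          Integrable (fun z => g z * Real.log (1 - D z)) π ∧
          r = ∫ z, f z * Real.log (D z) ∂π + ∫ z, g z * Real.log (1 - D z) ∂π} :=
      ⟨D, hDm, hD01, hi1, hi2, rfl⟩
    have hvb := hb hv
    -- lower bound on v
    have hmono : ∫ z, (f z * Real.log (f z / (f z + g z)) + g z * Real.log (g z / (f z + g z))
          + (f z + g z) * Real.log (1 - ε)) ∂π
        ≤ ∫ z, (f z * Real.log (D z) + g z * Real.log (1 - D z)) ∂π := by
      refine integral_mono ((h3.add h4).add ((hfi.add hgi).mul_const _)) (hi1.add hi2)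
        fun z => ?_
      have h := dsgan_ptwise_lower (f z) (g z) ε (hf0 z) (hg0 z) hε0 hε1
      simp only [hDeq z, hTdef]
      exact h
    have hL : ∫ z, (f z * Real.log (f z / (f z + g z)) + g z * Real.log (g z / (f z + g z))
          + (f z + g z) * Real.log (1 - ε)) ∂π
        = (∫ z, f z * Real.log (f z / (f z + g z)) ∂π)
          + (∫ z, g z * Real.log (g z / (f z + g z)) ∂π) + 2 * Real.log (1 - ε) := by
      have hI34 : Integrable (fun z => f z * Real.log (f z / (f z + g z))
          + g z * Real.log (g z / (f z + g z))) π := h3.add h4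
      have hIfg : Integrable (fun z => (f z + g z) * Real.log (1 - ε)) π :=
        (hfi.add hgi).mul_const _
      rw [integral_add hI34 hIfg, integral_add h3 h4]
      have h5 : ∫ z, (f z + g z) * Real.log (1 - ε) ∂π
          = (∫ z, (f z + g z) ∂π) * Real.log (1 - ε) :=
        integral_mul_const (Real.log (1 - ε)) (fun z => f z + g z)
      rw [h5, integral_add hfi hgi, hf1, hg1]; ring
    have hR : ∫ z, (f z * Real.log (D z) + g z * Real.log (1 - D z)) ∂π
        = ∫ z, f z * Real.log (D z) ∂π + ∫ z, g z * Real.log (1 - D z) ∂π :=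
      integral_add hi1 hi2
    rw [hL, hR] at hmono
    linarith [hvb, hmono, hlogε]

lemma dsgan_klDiv {Z : Type*} [MeasurableSpace Z] (π : Measure Z) [SigmaFinite π]
    (f g : Z → ℝ) (hfm : Measurable f) (hgm : Measurable g)
    (hf0 : ∀ z, 0 ≤ f z) (hg0 : ∀ z, 0 ≤ g z)
    (hfi : Integrable f π) (hgi : Integrable g π)
    (hf1 : ∫ z, f z ∂π = 1)
    (h3 : Integrable (fun z => f z * Real.log (f z / (f z + g z))) π) :
    klDiv (π.withDensity fun z => ENNReal.ofReal (f z))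
      ((1/2 : ℝ≥0∞) • (π.withDensity (fun z => ENNReal.ofReal (f z)) +
        π.withDensity fun z => ENNReal.ofReal (g z)))
      = Real.log 2 + ∫ z, f z * Real.log (f z / (f z + g z)) ∂π := by
  have hfE : Measurable (fun z => ENNReal.ofReal (f z)) := hfm.ennreal_ofReal
  have hgE : Measurable (fun z => ENNReal.ofReal (g z)) := hgm.ennreal_ofReal
  set mE : Z → ℝ≥0∞ := fun z => (1/2 : ℝ≥0∞) * (ENNReal.ofReal (f z) + ENNReal.ofReal (g z))
    with hmEdef
  have hmE : Measurable mE := (hfE.add hgE).const_mul _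
  have hMeq : ((1/2 : ℝ≥0∞) • (π.withDensity (fun z => ENNReal.ofReal (f z)) +
      π.withDensity fun z => ENNReal.ofReal (g z))) = π.withDensity mE := by
    rw [← withDensity_add_left hfE]
    rw [show ((fun z => ENNReal.ofReal (f z)) + fun z => ENNReal.ofReal (g z))
      = (fun z => ENNReal.ofReal (f z) + ENNReal.ofReal (g z)) from rfl]
    rw [← withDensity_smul _ (show Measurable (fun z => ENNReal.ofReal (f z) + ENNReal.ofReal (g z)) from hfE.add hgE)]
    rfl
  have hmtop : ∀ z, mE z ≠ ∞ := fun z => by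
    simp only [hmEdef]
    exact ENNReal.mul_ne_top (by norm_num)
      (ENNReal.add_ne_top.2 ⟨ENNReal.ofReal_ne_top, ENNReal.ofReal_ne_top⟩)
  have hfle : ∀ z, ENNReal.ofReal (f z) ≤ 2 * mE z := fun z => by
    simp only [hmEdef]
    rw [← mul_assoc]
    have h2 : (2 : ℝ≥0∞) * (1/2) = 1 := by
      rw [one_div]
      exact ENNReal.mul_inv_cancel (by norm_num) (by norm_num)
    rw [h2, one_mul]
    exact le_self_add
  have hPfin : IsFiniteMeasure (π.withDensity fun z => ENNReal.ofReal (f z)) :=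
    isFiniteMeasure_withDensity_ofReal hfi.2
  have hQfin : IsFiniteMeasure (π.withDensity fun z => ENNReal.ofReal (g z)) :=
    isFiniteMeasure_withDensity_ofReal hgi.2
  have hfl : ∫⁻ z, ENNReal.ofReal (f z) ∂π < ∞ :=
    (hasFiniteIntegral_iff_ofReal (ae_of_all _ hf0)).1 hfi.2
  have hgl : ∫⁻ z, ENNReal.ofReal (g z) ∂π < ∞ :=
    (hasFiniteIntegral_iff_ofReal (ae_of_all _ hg0)).1 hgi.2
  have hMfin : IsFiniteMeasure (π.withDensity mE) := by
    refine isFiniteMeasure_withDensity ?_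
    have hml : ∫⁻ z, mE z ∂π = 1/2 * ((∫⁻ z, ENNReal.ofReal (f z) ∂π)
        + ∫⁻ z, ENNReal.ofReal (g z) ∂π) := by
      simp only [hmEdef]
      rw [lintegral_const_mul _ (show Measurable (fun z => ENNReal.ofReal (f z) + ENNReal.ofReal (g z)) from hfE.add hgE), lintegral_add_left hfE]
    rw [hml]
    exact ENNReal.mul_ne_top (by norm_num) (ENNReal.add_ne_top.2 ⟨hfl.ne, hgl.ne⟩)
  have hPM : (π.withDensity fun z => ENNReal.ofReal (f z)) ≪ π.withDensity mE := by
    refine Measure.AbsolutelyContinuous.mk fun s hs hMs => ?_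
    rw [withDensity_apply _ hs] at hMs ⊢
    refine le_antisymm ?_ zero_le
    calc ∫⁻ z in s, ENNReal.ofReal (f z) ∂π ≤ ∫⁻ z in s, 2 * mE z ∂π :=
          lintegral_mono fun z => hfle z
      _ = 2 * ∫⁻ z in s, mE z ∂π := lintegral_const_mul _ hmE
      _ = 0 := by rw [hMs, mul_zero]
  have hPπ : (π.withDensity fun z => ENNReal.ofReal (f z)) ≪ π :=
    withDensity_absolutelyContinuous _ _
  -- a.e. positivity of mE w.r.t. P
  have hm0 : ∀ᵐ z ∂(π.withDensity fun z => ENNReal.ofReal (f z)), mE z ≠ 0 := by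
    rw [ae_iff]
    have hsm : MeasurableSet {z | ¬ mE z ≠ 0} := by
      have : {z | ¬ mE z ≠ 0} = mE ⁻¹' {0} := by ext z; simp
      rw [this]
      exact hmE (measurableSet_singleton 0)
    rw [withDensity_apply _ hsm]
    have hz : ∀ z ∈ {z | ¬ mE z ≠ 0}, ENNReal.ofReal (f z) = 0 := by
      intro z hz
      simp only [Set.mem_setOf_eq, not_not] at hz
      have := hfle z
      rw [hz, mul_zero] at this
      exact le_antisymm this zero_le
    calc ∫⁻ z in {z | ¬ mE z ≠ 0}, ENNReal.ofReal (f z) ∂π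
        = ∫⁻ z in {z | ¬ mE z ≠ 0}, 0 ∂π := setLIntegral_congr_fun hsm hz
      _ = 0 := lintegral_zero
  -- Radon-Nikodym derivative
  have h1 : ((π.withDensity fun z => ENNReal.ofReal (f z)).rnDeriv (π.withDensity mE))
        * ((π.withDensity mE).rnDeriv π)
      =ᵐ[π] (π.withDensity fun z => ENNReal.ofReal (f z)).rnDeriv π :=
    Measure.rnDeriv_mul_rnDeriv hPM
  have h2 : (π.withDensity fun z => ENNReal.ofReal (f z)).rnDeriv π
      =ᵐ[π] fun z => ENNReal.ofReal (f z) := Measure.rnDeriv_withDensity π hfE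
  have h3' : (π.withDensity mE).rnDeriv π =ᵐ[π] mE := Measure.rnDeriv_withDensity π hmE
  have hrn : (π.withDensity fun z => ENNReal.ofReal (f z)).rnDeriv (π.withDensity mE)
      =ᵐ[π.withDensity fun z => ENNReal.ofReal (f z)]
        fun z => ENNReal.ofReal (f z) / mE z := by
    filter_upwards [hPπ.ae_eq h1, hPπ.ae_eq h2, hPπ.ae_eq h3', hm0] with z e1 e2 e3 hz0
    have : (π.withDensity fun z => ENNReal.ofReal (f z)).rnDeriv (π.withDensity mE) z * mE z
        = ENNReal.ofReal (f z) := by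
      rw [← e3, ← e2]
      exact e1
    rw [ENNReal.eq_div_iff hz0 (hmtop z), mul_comm]
    exact this
  -- rewrite klDiv as an integral over π
  have hlogeq : (fun z => Real.log
        (((π.withDensity fun z => ENNReal.ofReal (f z)).rnDeriv (π.withDensity mE) z).toReal))
      =ᵐ[π.withDensity fun z => ENNReal.ofReal (f z)]
        fun z => Real.log (f z / ((1/2) * (f z + g z))) := by
    filter_upwards [hrn] with z hz
    rw [hz, ENNReal.toReal_div, ENNReal.toReal_ofReal (hf0 z)]
    congr 2
    simp only [hmEdef]
    rw [ENNReal.toReal_mul, ENNReal.toReal_add ENNReal.ofReal_ne_top ENNReal.ofReal_ne_top,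
      ENNReal.toReal_ofReal (hf0 z), ENNReal.toReal_ofReal (hg0 z)]
    norm_num
  have step1 : klDiv (π.withDensity fun z => ENNReal.ofReal (f z)) (π.withDensity mE)
      = ∫ z, Real.log (f z / ((1/2) * (f z + g z)))
          ∂(π.withDensity fun z => ENNReal.ofReal (f z)) := by
    unfold klDiv
    exact integral_congr_ae hlogeq
  have hofReal : (fun z => ENNReal.ofReal (f z)) = fun z => ((f z).toNNReal : ℝ≥0∞) := rfl
  have step2 : ∫ z, Real.log (f z / ((1/2) * (f z + g z)))
        ∂(π.withDensity fun z => ENNReal.ofReal (f z))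
      = ∫ z, f z * Real.log (f z / ((1/2) * (f z + g z))) ∂π := by
    rw [hofReal, integral_withDensity_eq_integral_smul hfm.real_toNNReal]
    congr 1
    funext z
    rw [NNReal.smul_def, smul_eq_mul, Real.coe_toNNReal _ (hf0 z)]
  have step3 : ∀ z, f z * Real.log (f z / ((1/2) * (f z + g z)))
      = f z * Real.log 2 + f z * Real.log (f z / (f z + g z)) := by
    intro z
    rcases eq_or_lt_of_le (hf0 z) with hf | hf
    · rw [← hf, zero_mul, zero_mul, zero_mul, add_zero]
    · have hfg : 0 < f z + g z := by linarith [hg0 z]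
      have : f z / ((1/2) * (f z + g z)) = 2 * (f z / (f z + g z)) := by
        rw [div_eq_iff (by positivity : (1/2 : ℝ) * (f z + g z) ≠ 0)]
        field_simp
      rw [this, Real.log_mul (by norm_num) (by positivity), mul_add]
  rw [hMeq, step1, step2]
  have step4 : ∫ z, f z * Real.log (f z / ((1/2) * (f z + g z))) ∂π
      = ∫ z, (f z * Real.log 2 + f z * Real.log (f z / (f z + g z))) ∂π :=
    integral_congr_ae (ae_of_all _ fun z => step3 z)
  rw [step4, integral_add (hfi.mul_const _) h3]
  have : ∫ z, f z * Real.log 2 ∂π = (∫ z, f z ∂π) * Real.log 2 :=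
    integral_mul_const _ _
  rw [this, hf1, one_mul]

lemma dsgan_prod_int {Y X : Type*} [MeasurableSpace Y] [MeasurableSpace X]
    (ν : Measure Y) [SigmaFinite ν] (μ : Measure X) [SigmaFinite μ]
    (p : Y → ℝ) (hpm : Measurable p) (hp0 : ∀ y, 0 ≤ p y) (hp1 : ∫ y, p y ∂ν = 1)
    (px : Y × X → ℝ) (hpxm : Measurable px) (hpx0 : ∀ z, 0 ≤ px z)
    (hpx1 : ∀ y, ∫ x, px (y, x) ∂μ = 1) :
    Integrable (fun z => p z.1 * px z) (ν.prod μ) ∧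
      ∫ z, p z.1 * px z ∂(ν.prod μ) = 1 := by
  have hfm : Measurable fun z : Y × X => p z.1 * px z :=
    (hpm.comp measurable_fst).mul hpxm
  have hf0 : ∀ z : Y × X, 0 ≤ p z.1 * px z := fun z => mul_nonneg (hp0 _) (hpx0 _)
  have hpint : Integrable p ν := by
    by_contra h
    rw [integral_undef h] at hp1
    norm_num at hp1
  have hpxint : ∀ y, Integrable (fun x => px (y, x)) μ := by
    intro y
    by_contra h
    have := hpx1 y
    rw [integral_undef h] at this
    norm_num at this
  have hlint : ∫⁻ z, ENNReal.ofReal (p z.1 * px z) ∂(ν.prod μ) = 1 := by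
    rw [lintegral_prod _ hfm.ennreal_ofReal.aemeasurable]
    have hinner : ∀ y, ∫⁻ x, ENNReal.ofReal (p y * px (y, x)) ∂μ = ENNReal.ofReal (p y) := by
      intro y
      calc ∫⁻ x, ENNReal.ofReal (p y * px (y, x)) ∂μ
          = ∫⁻ x, ENNReal.ofReal (p y) * ENNReal.ofReal (px (y, x)) ∂μ := by
            congr 1; funext x; rw [ENNReal.ofReal_mul (hp0 y)]
        _ = ENNReal.ofReal (p y) * ∫⁻ x, ENNReal.ofReal (px (y, x)) ∂μ :=
            lintegral_const_mul _ ((hpxm.comp measurable_prodMk_left).ennreal_ofReal)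
        _ = ENNReal.ofReal (p y) * 1 := by
            rw [← ofReal_integral_eq_lintegral_ofReal (hpxint y)
              (ae_of_all _ fun x => hpx0 _), hpx1 y, ofReal_one]
        _ = ENNReal.ofReal (p y) := mul_one _
    have houter : ∫⁻ y, ∫⁻ x, ENNReal.ofReal (p (y, x).1 * px (y, x)) ∂μ ∂ν
        = ∫⁻ y, ENNReal.ofReal (p y) ∂ν := lintegral_congr fun y => hinner y
    rw [houter, ← ofReal_integral_eq_lintegral_ofReal hpint (ae_of_all _ hp0), hp1, ofReal_one]
  have hint : Integrable (fun z : Y × X => p z.1 * px z) (ν.prod μ) := by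
    refine ⟨hfm.aestronglyMeasurable, ?_⟩
    rw [hasFiniteIntegral_iff_ofReal (ae_of_all _ hf0), hlint]
    exact one_lt_top
  refine ⟨hint, ?_⟩
  have h1 : ENNReal.ofReal (∫ z, p z.1 * px z ∂(ν.prod μ)) = 1 := by
    rw [ofReal_integral_eq_lintegral_ofReal hint (ae_of_all _ hf0), hlint]
  have h0 : 0 ≤ ∫ z, p z.1 * px z ∂(ν.prod μ) := integral_nonneg hf0
  rw [← ofReal_one] at h1
  exact (ENNReal.ofReal_eq_ofReal_iff h0 (by norm_num)).1 h1

/-- Optimality of DSGAN: the value function. -/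
theorem dsgan_sup_value_eq_joint_jsd
    {Y X : Type*} [MeasurableSpace Y] [MeasurableSpace X]
    (ν : Measure Y) [SigmaFinite ν] (μ : Measure X) [SigmaFinite μ]
    (p q : Y → ℝ) (hpm : Measurable p) (hqm : Measurable q)
    (hp0 : ∀ y, 0 ≤ p y) (hq0 : ∀ y, 0 ≤ q y)
    (hp1 : ∫ y, p y ∂ν = 1) (hq1 : ∫ y, q y ∂ν = 1)
    (px qx : Y × X → ℝ) (hpxm : Measurable px) (hqxm : Measurable qx)
    (hpx0 : ∀ z, 0 ≤ px z) (hqx0 : ∀ z, 0 ≤ qx z)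
    (hpx1 : ∀ y, ∫ x, px (y, x) ∂μ = 1) (hqx1 : ∀ y, ∫ x, qx (y, x) ∂μ = 1)
    (h3 : Integrable
      (fun z => p z.1 * px z *
        Real.log (p z.1 * px z / (p z.1 * px z + q z.1 * qx z))) (ν.prod μ))
    (h4 : Integrable
      (fun z => q z.1 * qx z *
        Real.log (q z.1 * qx z / (p z.1 * px z + q z.1 * qx z))) (ν.prod μ)) :
    IsLUB
      {r : ℝ | ∃ D : Y × X → ℝ, Measurable D ∧ (∀ z, 0 < D z ∧ D z < 1) ∧
        Integrable (fun z => p z.1 * px z * Real.log (D z)) (ν.prod μ) ∧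
        Integrable (fun z => q z.1 * qx z * Real.log (1 - D z)) (ν.prod μ) ∧
        r = ∫ z, p z.1 * px z * Real.log (D z) ∂(ν.prod μ) +
            ∫ z, q z.1 * qx z * Real.log (1 - D z) ∂(ν.prod μ)}
      (-2 * Real.log 2 +
        2 * jsd ((ν.prod μ).withDensity fun z => ENNReal.ofReal (p z.1 * px z))
                ((ν.prod μ).withDensity fun z => ENNReal.ofReal (q z.1 * qx z))) := by
  obtain ⟨hfi, hf1⟩ := dsgan_prod_int ν μ p hpm hp0 hp1 px hpxm hpx0 hpx1
  obtain ⟨hgi, hg1⟩ := dsgan_prod_int ν μ q hqm hq0 hq1 qx hqxm hqx0 hqx1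
  have hfm : Measurable fun z : Y × X => p z.1 * px z := (hpm.comp measurable_fst).mul hpxm
  have hgm : Measurable fun z : Y × X => q z.1 * qx z := (hqm.comp measurable_fst).mul hqxm
  have hf0 : ∀ z : Y × X, 0 ≤ p z.1 * px z := fun z => mul_nonneg (hp0 _) (hpx0 _)
  have hg0 : ∀ z : Y × X, 0 ≤ q z.1 * qx z := fun z => mul_nonneg (hq0 _) (hqx0 _)
  have hKP := dsgan_klDiv (ν.prod μ) (fun z => p z.1 * px z) (fun z => q z.1 * qx z)
    hfm hgm hf0 hg0 hfi hgi hf1 h3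
  have h4' : Integrable
      (fun z => q z.1 * qx z *
        Real.log (q z.1 * qx z / (q z.1 * qx z + p z.1 * px z))) (ν.prod μ) := by
    refine h4.congr (Filter.EventuallyEq.symm (ae_of_all _ fun z => ?_))
    beta_reduce
    rw [add_comm (q z.1 * qx z) (p z.1 * px z)]
  have hKQ := dsgan_klDiv (ν.prod μ) (fun z => q z.1 * qx z) (fun z => p z.1 * px z)
    hgm hfm hg0 hf0 hgi hfi hg1 h4'
  have hI4 : ∫ z, q z.1 * qx z * Real.log (q z.1 * qx z / (q z.1 * qx z + p z.1 * px z))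
        ∂(ν.prod μ)
      = ∫ z, q z.1 * qx z * Real.log (q z.1 * qx z / (p z.1 * px z + q z.1 * qx z))
        ∂(ν.prod μ) := by
    refine integral_congr_ae (ae_of_all _ fun z => ?_)
    beta_reduce
    rw [add_comm (q z.1 * qx z) (p z.1 * px z)]
  have hcomm : ((1/2 : ℝ≥0∞) • ((ν.prod μ).withDensity (fun z => ENNReal.ofReal (q z.1 * qx z))
        + (ν.prod μ).withDensity fun z => ENNReal.ofReal (p z.1 * px z)))
      = ((1/2 : ℝ≥0∞) • ((ν.prod μ).withDensity (fun z => ENNReal.ofReal (p z.1 * px z))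
        + (ν.prod μ).withDensity fun z => ENNReal.ofReal (q z.1 * qx z))) := by
    rw [add_comm]
  rw [hcomm, hI4] at hKQ
  have hbound : (-2 * Real.log 2 +
      2 * jsd ((ν.prod μ).withDensity fun z => ENNReal.ofReal (p z.1 * px z))
              ((ν.prod μ).withDensity fun z => ENNReal.ofReal (q z.1 * qx z)))
      = (∫ z, p z.1 * px z * Real.log (p z.1 * px z / (p z.1 * px z + q z.1 * qx z))
          ∂(ν.prod μ)) +
        (∫ z, q z.1 * qx z * Real.log (q z.1 * qx z / (p z.1 * px z + q z.1 * qx z))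
          ∂(ν.prod μ)) := by
    unfold jsd
    rw [hKP, hKQ]
    ring
  rw [hbound]
  exact dsgan_isLUB (ν.prod μ) (fun z => p z.1 * px z) (fun z => q z.1 * qx z)
    hfm hgm hf0 hg0 hfi hgi hf1 hg1 h3 h4
end
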